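/- If G is a square-stable graph with at least 2 vertices, then α(G) ≤ μ(G). -/

import Mathlib

open SimpleGraph

/-- The square of a graph: vertices adjacent iff at distance 1 or 2 in `G`. -/
def SimpleGraph.sq {V : Type*} (G : SimpleGraph V) : SimpleGraph V where
  Adj u v := G.Adj u v ∨ (u ≠ v ∧ ∃ w, G.Adj u w ∧ G.Adj w v)
  symm := by
    constructor
    rintro u v (h | ⟨hne, w, h1, h2⟩)
    · exact Or.inl h.symm
    · exact Or.inr ⟨hne.symm, w, h2.symm, h1.symm⟩
  loopless := by
    constructor
    rintro u (h | ⟨hne, _⟩)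
    · exact G.ne_of_adj h rfl
    · exact hne rfl

/-- A stable (independent) set of vertices. -/
def SimpleGraph.IsStableSet {V : Type*} (G : SimpleGraph V) (s : Set V) : Prop :=
  s.Pairwise fun u v => ¬ G.Adj u v

/-- The stability (independence) number. -/
noncomputable def SimpleGraph.alpha {V : Type*} (G : SimpleGraph V) : ℕ :=
  sSup {n | ∃ s : Finset V, G.IsStableSet ↑s ∧ s.card = n}

/-- The matching number: maximum number of edges in a matching. -/
noncomputable def SimpleGraph.mu {V : Type*} (G : SimpleGraph V) : ℕ :=
  sSup {n | ∃ M : G.Subgraph, M.IsMatching ∧ M.edgeSet.ncard = n}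

/-- `s` is a maximum stable set. -/
def SimpleGraph.IsMaximumStable {V : Type*} (G : SimpleGraph V) (s : Finset V) : Prop :=
  G.IsStableSet ↑s ∧ s.card = G.alpha

/-- `s` is a maximal stable set. -/
def SimpleGraph.IsMaximalStable {V : Type*} (G : SimpleGraph V) (s : Finset V) : Prop :=
  G.IsStableSet ↑s ∧ ∀ v ∉ s, ¬ G.IsStableSet (insert v (↑s : Set V))

/-- `G` is square-stable if `α(G) = α(G²)`. -/
def SimpleGraph.SquareStable {V : Type*} (G : SimpleGraph V) : Prop :=
  G.alpha = G.sq.alpha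

/-- König-Egerváry graph: `α(G) + μ(G) = |V(G)|`. -/
def SimpleGraph.KonigEgervary {V : Type*} [Fintype V] (G : SimpleGraph V) : Prop :=
  G.alpha + G.mu = Fintype.card V

/-- A pendant vertex: a vertex of degree 1. -/
def SimpleGraph.Pendant {V : Type*} (G : SimpleGraph V) (v : V) : Prop :=
  (G.neighborSet v).ncard = 1

/-- `G` has a perfect matching consisting of pendant edges. -/
def SimpleGraph.HasPendantPerfectMatching {V : Type*} (G : SimpleGraph V) : Prop :=
  ∃ M : G.Subgraph, M.IsPerfectMatching ∧ ∀ e ∈ M.edgeSet, ∃ v ∈ e, G.Pendant v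

/-- A simplicial vertex: its neighborhood induces a clique. -/
def SimpleGraph.IsSimplicial {V : Type*} (G : SimpleGraph V) (v : V) : Prop :=
  G.IsClique (G.neighborSet v)

/-- `G` is well-covered: every maximal stable set is maximum. -/
def SimpleGraph.WellCovered {V : Type*} (G : SimpleGraph V) : Prop :=
  ∀ s : Finset V, G.IsMaximalStable s → s.card = G.alpha

/-- `G` is very well-covered: well-covered, no isolated vertices, `|V| = 2α`. -/
def SimpleGraph.VeryWellCovered {V : Type*} [Fintype V] (G : SimpleGraph V) : Prop :=
  G.WellCovered ∧ (∀ v : V, (G.neighborSet v).ncard ≠ 0) ∧ Fintype.card V = 2 * G.alpha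

theorem stmt15 {V : Type*} [Fintype V] (G : SimpleGraph V) (hc : G.Connected)
    (h2 : 2 ≤ Fintype.card V) (hss : G.SquareStable) :
    G.alpha ≤ G.mu := by
  classical
  have hnt : Nontrivial V := Fintype.one_lt_card_iff_nontrivial.mp h2
  -- every vertex has a neighbor
  have hnbr : ∀ v : V, ∃ w, G.Adj v w := by
    intro v
    obtain ⟨u, hu⟩ := exists_ne v
    obtain ⟨p⟩ := hc.preconnected v u
    cases p with
    | nil => exact absurd rfl hu
    | cons h _ => exact ⟨_, h⟩
  choose f hf using hnbr
  -- a maximum stable set of G.sq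
  have hbdd : BddAbove {n | ∃ s : Finset V, G.sq.IsStableSet ↑s ∧ s.card = n} := by
    refine ⟨Fintype.card V, ?_⟩
    rintro n ⟨s, _, rfl⟩
    exact Finset.card_le_card (Finset.subset_univ s)
  have hne : {n | ∃ s : Finset V, G.sq.IsStableSet ↑s ∧ s.card = n}.Nonempty :=
    ⟨0, ∅, by simp [SimpleGraph.IsStableSet], by simp⟩
  have hmem := Nat.sSup_mem hne hbdd
  obtain ⟨S, hS, hScard⟩ := hmem
  -- build a matching from S
  let M : G.Subgraph :=
    { verts := ↑S ∪ f '' ↑S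
      Adj := fun u v => (u ∈ S ∧ v = f u) ∨ (v ∈ S ∧ u = f v)
      adj_sub := by
        rintro u v (⟨hu, rfl⟩ | ⟨hv, rfl⟩)
        · exact hf u
        · exact (hf v).symm
      edge_vert := by
        rintro u v (⟨hu, rfl⟩ | ⟨hv, rfl⟩)
        · exact Or.inl hu
        · exact Or.inr ⟨v, hv, rfl⟩
      symm := by
        constructor
        rintro u v (⟨hu, rfl⟩ | ⟨hv, rfl⟩)
        · exact Or.inr ⟨hu, rfl⟩
        · exact Or.inl ⟨hv, rfl⟩ }
  have hMadj : ∀ u v, M.Adj u v ↔ (u ∈ S ∧ v = f u) ∨ (v ∈ S ∧ u = f v) := fun _ _ => Iff.rfl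
  have hMatch : M.IsMatching := by
    rintro v (hv | ⟨s, hs, rfl⟩)
    · refine ⟨f v, Or.inl ⟨hv, rfl⟩, ?_⟩
      rintro w ((⟨_, rfl⟩ : _ ∧ _) | ⟨hw, rfl2⟩)
      · rfl
      · exfalso
        have hadj : G.Adj w v := rfl2 ▸ hf w
        exact hS hw hv hadj.ne (Or.inl hadj)
    · by_cases hvS : f s ∈ S
      · refine ⟨f (f s), Or.inl ⟨hvS, rfl⟩, ?_⟩
        rintro w ((⟨_, rfl⟩ : _ ∧ _) | ⟨hw, rfl2⟩)
        · rfl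
        · exfalso
          have hadj : G.Adj w (f s) := rfl2 ▸ hf w
          exact hS hw hvS hadj.ne (Or.inl hadj)
      · refine ⟨s, Or.inr ⟨hs, rfl⟩, ?_⟩
        rintro w ((⟨h1, _⟩ : _ ∧ _) | ⟨hw, rfl2⟩)
        · exact absurd h1 hvS
        · -- f w = f s, w ∈ S, s ∈ S, so w = s (else dist ≤ 2)
          by_contra hws
          have : G.sq.Adj w s := Or.inr ⟨hws, f s, rfl2 ▸ hf w, (hf s).symm⟩
          exact hS hw hs hws this
  -- edge set cardinality
  have hEdge : M.edgeSet = (fun s => s(s, f s)) '' ↑S := by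
    ext e
    refine e.ind (fun u v => ?_)
    rw [SimpleGraph.Subgraph.mem_edgeSet]
    constructor
    · rintro (⟨hu, rfl⟩ | ⟨hv, rfl⟩)
      · exact ⟨u, hu, rfl⟩
      · exact ⟨v, hv, Sym2.eq_swap⟩
    · rintro ⟨x, hx, hxe⟩
      rw [Sym2.eq_iff] at hxe
      rcases hxe with ⟨rfl, rfl⟩ | ⟨rfl, rfl⟩
      · exact Or.inl ⟨hx, rfl⟩
      · exact Or.inr ⟨hx, rfl⟩
  have hInj : Set.InjOn (fun s => s(s, f s)) ↑S := by
    intro a ha b hb hab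
    simp only [Sym2.eq_iff] at hab
    rcases hab with ⟨h1, _⟩ | ⟨h1, h2⟩
    · exact h1
    · by_contra hne'
      have hadj : G.Adj a b := h2 ▸ hf a
      exact hS ha hb hne' (Or.inl hadj)
  have hEcard : M.edgeSet.ncard = S.card := by
    rw [hEdge, Set.ncard_image_of_injOn hInj, Set.ncard_coe_finset]
  -- conclude
  have hmu : S.card ≤ G.mu := by
    apply le_csSup
    · refine ⟨Fintype.card (Sym2 V), ?_⟩
      rintro n ⟨N, _, rfl⟩
      calc N.edgeSet.ncard ≤ (Set.univ : Set (Sym2 V)).ncard :=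
            Set.ncard_le_ncard (Set.subset_univ _) Set.finite_univ
        _ = Fintype.card (Sym2 V) := by rw [Set.ncard_univ, Nat.card_eq_fintype_card]
    · exact ⟨M, hMatch, hEcard⟩
  calc G.alpha = G.sq.alpha := hss
    _ = S.card := hScard.symm
    _ ≤ G.mu := hmu
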